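/- arXiv:1707.08690 — 2 statements merged into one kernel-verified Lean document; each statement's English description precedes it below -/
import Mathlib

section
/- Let G be a split graph with split partitions (C, I) and (C', I'). If |C| = |C'| + 1, then C is a maximum clique of G, I' is a maximum independent set of G, and C' ⊂ C. -/
/-- `s` is an independent set of `G`. -/
def SimpleGraph.IsIndepSet' {V : Type} (G : SimpleGraph V) (s : Set V) : Prop :=
  s.Pairwise fun u v => ¬ G.Adj u v

/-- `(C, I)` is a split partition of `G`. -/
def SimpleGraph.IsSplitPartition {V : Type} (G : SimpleGraph V) (C I : Set V) : Prop :=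
  C ∪ I = Set.univ ∧ Disjoint C I ∧ G.IsClique C ∧ G.IsIndepSet' I

lemma clique_inter_indep {V : Type} [Fintype V] {G : SimpleGraph V} {K J : Set V}
    (hK : G.IsClique K) (hJ : G.IsIndepSet' J) : (K ∩ J).ncard ≤ 1 := by
  classical
  rw [Set.ncard_le_one_iff (Set.toFinite _)]
  rintro a b ⟨haK, haJ⟩ ⟨hbK, hbJ⟩
  by_contra hne
  exact hJ haJ hbJ hne (hK haK hbK hne)

lemma clique_bound {V : Type} [Fintype V] {G : SimpleGraph V} {C I K : Set V}
    (hUn : C ∪ I = Set.univ) (hI : G.IsIndepSet' I) (hK : G.IsClique K) :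
    K.ncard ≤ C.ncard + 1 := by
  classical
  have hKeq : K = (K ∩ C) ∪ (K ∩ I) := by
    rw [← Set.inter_union_distrib_left, hUn, Set.inter_univ]
  calc K.ncard = ((K ∩ C) ∪ (K ∩ I)).ncard := by rw [← hKeq]
    _ ≤ (K ∩ C).ncard + (K ∩ I).ncard := Set.ncard_union_le _ _
    _ ≤ C.ncard + 1 := Nat.add_le_add (Set.ncard_le_ncard Set.inter_subset_right (Set.toFinite _))
        (clique_inter_indep hK hI)

lemma indep_bound {V : Type} [Fintype V] {G : SimpleGraph V} {C I J : Set V}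
    (hUn : C ∪ I = Set.univ) (hC : G.IsClique C) (hJ : G.IsIndepSet' J) :
    J.ncard ≤ I.ncard + 1 := by
  classical
  have hJeq : J = (J ∩ I) ∪ (J ∩ C) := by
    rw [← Set.inter_union_distrib_left, Set.union_comm I C, hUn, Set.inter_univ]
  calc J.ncard = ((J ∩ I) ∪ (J ∩ C)).ncard := by rw [← hJeq]
    _ ≤ (J ∩ I).ncard + (J ∩ C).ncard := Set.ncard_union_le _ _
    _ ≤ I.ncard + 1 := Nat.add_le_add (Set.ncard_le_ncard Set.inter_subset_right (Set.toFinite _))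
        (by rw [Set.inter_comm]; exact clique_inter_indep hC hJ)

theorem stmt3 {V : Type} [Fintype V] (G : SimpleGraph V) (C I C' I' : Set V)
    (h : G.IsSplitPartition C I) (h' : G.IsSplitPartition C' I')
    (hcard : C.ncard = C'.ncard + 1) :
    (G.IsClique C ∧ ∀ K : Set V, G.IsClique K → K.ncard ≤ C.ncard) ∧
    (G.IsIndepSet' I' ∧ ∀ J : Set V, G.IsIndepSet' J → J.ncard ≤ I'.ncard) ∧
    C' ⊂ C := by
  classical
  obtain ⟨hUn, hDisj, hCcl, hIind⟩ := h
  obtain ⟨hUn', hDisj', hCcl', hIind'⟩ := h'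
  -- total counts
  have htot : C.ncard + I.ncard = (Set.univ : Set V).ncard := by
    rw [← hUn, Set.ncard_union_eq hDisj (Set.toFinite _) (Set.toFinite _)]
  have htot' : C'.ncard + I'.ncard = (Set.univ : Set V).ncard := by
    rw [← hUn', Set.ncard_union_eq hDisj' (Set.toFinite _) (Set.toFinite _)]
  have hI' : I'.ncard = I.ncard + 1 := by omega
  refine ⟨⟨hCcl, fun K hK => ?_⟩, ⟨hIind', fun J hJ => ?_⟩, ?_⟩
  · have := clique_bound hUn' hIind' hK
    omega
  · have := indep_bound hUn hCcl hJ
    omega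
  · constructor
    · -- C' ⊆ C
      intro v hv
      by_contra hvC
      have hvI : v ∈ I := by
        rcases hUn ▸ Set.mem_univ v with hc | hi
        exacts [absurd hc hvC, hi]
      -- C' \ {v} ⊆ C, and C ∩ C' = C' \ {v}
      have hsub1 : (C' ∩ I).ncard ≤ 1 := clique_inter_indep hCcl' hIind
      have hCIsing : ∀ w ∈ C' ∩ I, w = v := by
        intro w hw
        exact (Set.ncard_le_one_iff (Set.toFinite _)).mp hsub1 hw ⟨hv, hvI⟩
      have heq : C ∩ C' = C' \ {v} := by
        ext w
        constructor
        · rintro ⟨hwC, hwC'⟩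
          refine ⟨hwC', ?_⟩
          simp only [Set.mem_singleton_iff]
          rintro rfl; exact hvC hwC
        · rintro ⟨hwC', hwv⟩
          refine ⟨?_, hwC'⟩
          have : w ∈ C ∪ I := hUn ▸ Set.mem_univ w
          rcases this with hc | hi
          · exact hc
          · exact absurd (hCIsing w ⟨hwC', hi⟩) hwv
      have h1 : (C ∩ C').ncard = C'.ncard - 1 := by
        rw [heq, Set.ncard_diff_singleton_of_mem hv]
      have hC'pos : 1 ≤ C'.ncard := (Set.ncard_pos (Set.toFinite _)).mpr ⟨v, hv⟩
      -- C ⊆ (C ∩ C') ∪ (C ∩ I'), with (C ∩ I').ncard ≤ 1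
      have hCeq : C = (C ∩ C') ∪ (C ∩ I') := by
        rw [← Set.inter_union_distrib_left, hUn', Set.inter_univ]
      have h2 : C.ncard ≤ (C ∩ C').ncard + (C ∩ I').ncard := by
        conv_lhs => rw [hCeq]
        exact Set.ncard_union_le _ _
      have h3 : (C ∩ I').ncard ≤ 1 := clique_inter_indep hCcl hIind'
      omega
    · -- C ⊄ C'
      intro hsub
      have := Set.ncard_le_ncard hsub (Set.toFinite _)
      omega
end

section
/- Let G be a connected split graph with split partition (C, I) such that C is a maximum clique of G. If G is a unit interval graph (equivalently here, admits an interval representation), then |I| ≤ 2. Consequently, any connected split unit interval graph satisfies |I| ≤ 3 for every split partition (C, I). -/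
/-- `rep` is a unit interval representation of `G`: each vertex `v` gets the
unit closed interval `[rep v, rep v + 1]`, and distinct vertices are adjacent
iff their intervals intersect. -/
def SimpleGraph.IsUnitIntervalRep {V : Type} (G : SimpleGraph V) (rep : V → ℝ) : Prop :=
  ∀ u v : V, G.Adj u v ↔ u ≠ v ∧ |rep u - rep v| ≤ 1

lemma exists_adj_aux {V : Type} (G : SimpleGraph V) (hconn : G.Connected) {u v : V} (h : u ≠ v) :
    ∃ x, G.Adj u x := by
  obtain ⟨p⟩ := hconn u v
  cases p with
  | nil => exact absurd rfl h
  | cons hadj _ => exact ⟨_, hadj⟩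

lemma mid3_aux {α : Type} (f : α → ℝ) {s : Set α} {a b c : α} (ha : a ∈ s) (hb : b ∈ s)
    (hc : c ∈ s) (hab : 1 < |f a - f b|) (hac : 1 < |f a - f c|) (hbc : 1 < |f b - f c|) :
    ∃ u ∈ s, ∃ v ∈ s, ∃ w ∈ s, f u + 1 < f v ∧ f v + 1 < f w := by
  rcases lt_abs.mp hab with h1 | h1 <;> rcases lt_abs.mp hac with h2 | h2 <;>
    rcases lt_abs.mp hbc with h3 | h3 <;>
  first
  | exact ⟨a, ha, b, hb, c, hc, by linarith, by linarith⟩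
  | exact ⟨a, ha, c, hc, b, hb, by linarith, by linarith⟩
  | exact ⟨b, hb, a, ha, c, hc, by linarith, by linarith⟩
  | exact ⟨b, hb, c, hc, a, ha, by linarith, by linarith⟩
  | exact ⟨c, hc, a, ha, b, hb, by linarith, by linarith⟩
  | exact ⟨c, hc, b, hb, a, ha, by linarith, by linarith⟩

lemma key_aux {V : Type} [Fintype V] (G : SimpleGraph V) (hconn : G.Connected) (rep : V → ℝ)
    (hrep : G.IsUnitIntervalRep rep) (C I : Set V) (hsplit : G.IsSplitPartition C I)
    (hmax : ∀ K : Set V, G.IsClique K → K.ncard ≤ C.ncard) : I.ncard ≤ 2 := by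
  obtain ⟨hunion, hdisj, hclique, hindep⟩ := hsplit
  by_contra h
  push_neg at h
  obtain ⟨a, ha, b, hb, c, hc, hab, hac, hbc⟩ := (Set.two_lt_ncard (Set.toFinite I)).mp h
  have dist : ∀ x ∈ I, ∀ y ∈ I, x ≠ y → 1 < |rep x - rep y| := by
    intro x hx y hy hxy
    by_contra hle
    push_neg at hle
    exact hindep hx hy hxy ((hrep x y).mpr ⟨hxy, hle⟩)
  obtain ⟨u, hu, v, hv, w, hw, huv, hvw⟩ :=
    mid3_aux rep ha hb hc (dist _ ha _ hb hab) (dist _ ha _ hc hac) (dist _ hb _ hc hbc)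
  have hune : u ≠ v := fun h => by rw [h] at huv; linarith
  have hwne : w ≠ v := fun h => by rw [h] at hvw; linarith
  have memC : ∀ x ∈ I, ∀ y, G.Adj x y → y ∈ C := by
    intro x hx y hadj
    have hy : y ∈ C ∪ I := hunion ▸ Set.mem_univ y
    rcases hy with h' | h'
    · exact h'
    · exact absurd hadj (hindep hx h' (G.ne_of_adj hadj))
  obtain ⟨cu, hcu⟩ := exists_adj_aux G hconn hune
  obtain ⟨cw, hcw⟩ := exists_adj_aux G hconn hwne
  have hcuC : cu ∈ C := memC u hu cu hcu
  have hcwC : cw ∈ C := memC w hw cw hcw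
  have hcu1 : |rep u - rep cu| ≤ 1 := ((hrep u cu).mp hcu).2
  have hcw1 : |rep w - rep cw| ≤ 1 := ((hrep w cw).mp hcw).2
  have cliqdist : ∀ x ∈ C, ∀ y ∈ C, |rep x - rep y| ≤ 1 := by
    intro x hx y hy
    by_cases hxy : x = y
    · simp [hxy]
    · exact ((hrep x y).mp (hclique hx hy hxy)).2
  have hvadj : ∀ x ∈ C, G.Adj v x := by
    intro x hx
    have h1 := cliqdist x hx cu hcuC
    have h2 := cliqdist x hx cw hcwC
    have hne : v ≠ x := fun h => Set.disjoint_left.mp hdisj hx (h ▸ hv)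
    refine (hrep v x).mpr ⟨hne, ?_⟩
    rw [abs_le] at h1 h2 hcu1 hcw1 ⊢
    constructor <;> linarith
  have hvC : v ∉ C := fun h' => Set.disjoint_left.mp hdisj h' hv
  have hins : (insert v C).ncard = C.ncard + 1 := Set.ncard_insert_of_notMem hvC (Set.toFinite C)
  have hK : G.IsClique (insert v C) := by
    intro x hx y hy hxy
    rcases Set.mem_insert_iff.mp hx with rfl | hx'
    · rcases Set.mem_insert_iff.mp hy with rfl | hy'
      · exact absurd rfl hxy
      · exact hvadj y hy'
    · rcases Set.mem_insert_iff.mp hy with rfl | hy'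
      · exact (hvadj x hx').symm
      · exact hclique hx' hy' hxy
  have := hmax _ hK
  omega

theorem stmt11 {V : Type} [Fintype V] (G : SimpleGraph V)
    (hconn : G.Connected) (rep : V → ℝ) (hrep : G.IsUnitIntervalRep rep)
    (C I : Set V) (hsplit : G.IsSplitPartition C I) :
    ((∀ K : Set V, G.IsClique K → K.ncard ≤ C.ncard) → I.ncard ≤ 2) ∧
    I.ncard ≤ 3 := by
  have hsub1 : ∀ K : Set V, G.IsClique K → ∀ x ∈ K ∩ I, ∀ y ∈ K ∩ I, x = y := by
    rintro K hK x ⟨hxK, hxI⟩ y ⟨hyK, hyI⟩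
    by_contra hxy
    exact hsplit.2.2.2 hxI hyI hxy (hK hxK hyK hxy)
  have hcover : ∀ K : Set V, K ⊆ (K ∩ C) ∪ (K ∩ I) := by
    intro K x hx
    have hmem : x ∈ C ∪ I := hsplit.1 ▸ Set.mem_univ x
    rcases hmem with h | h
    exacts [Or.inl ⟨hx, h⟩, Or.inr ⟨hx, h⟩]
  constructor
  · exact key_aux G hconn rep hrep C I hsplit
  · by_cases hA : ∃ v ∈ I, ∀ c ∈ C, G.Adj v c
    · obtain ⟨v, hv, hvadj⟩ := hA
      have hvC : v ∉ C := fun h => Set.disjoint_left.mp hsplit.2.1 h hv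
      have hsplit' : G.IsSplitPartition (insert v C) (I \ {v}) := by
        refine ⟨?_, ?_, ?_, ?_⟩
        · ext x
          simp only [Set.mem_union, Set.mem_insert_iff, Set.mem_diff, Set.mem_singleton_iff,
            Set.mem_univ, iff_true]
          by_cases hxv : x = v
          · exact Or.inl (Or.inl hxv)
          · have hmem : x ∈ C ∪ I := hsplit.1 ▸ Set.mem_univ x
            rcases hmem with h | h
            exacts [Or.inl (Or.inr h), Or.inr ⟨h, hxv⟩]
        · rw [Set.disjoint_left]
          rintro x hx hxI
          rcases Set.mem_insert_iff.mp hx with rfl | hx'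
          · exact hxI.2 rfl
          · exact Set.disjoint_left.mp hsplit.2.1 hx' hxI.1
        · intro x hx y hy hxy
          rcases Set.mem_insert_iff.mp hx with rfl | hx'
          · rcases Set.mem_insert_iff.mp hy with rfl | hy'
            · exact absurd rfl hxy
            · exact hvadj y hy'
          · rcases Set.mem_insert_iff.mp hy with rfl | hy'
            · exact (hvadj x hx').symm
            · exact hsplit.2.2.1 hx' hy' hxy
        · intro x hx y hy hxy
          exact hsplit.2.2.2 hx.1 hy.1 hxy
      have hmax' : ∀ K : Set V, G.IsClique K → K.ncard ≤ (insert v C).ncard := by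
        intro K hK
        have h1 : (K ∩ I).ncard ≤ 1 := (Set.ncard_le_one (Set.toFinite _)).mpr (hsub1 K hK)
        have h2 : (K ∩ C).ncard ≤ C.ncard :=
          Set.ncard_le_ncard Set.inter_subset_right (Set.toFinite _)
        have h3 : K.ncard ≤ (K ∩ C).ncard + (K ∩ I).ncard :=
          le_trans (Set.ncard_le_ncard (hcover K) (Set.toFinite _)) (Set.ncard_union_le _ _)
        rw [Set.ncard_insert_of_notMem hvC (Set.toFinite C)]
        omega
      have hkey := key_aux G hconn rep hrep _ _ hsplit' hmax'
      have hIv : (I \ {v}).ncard + 1 = I.ncard := Set.ncard_diff_singleton_add_one hv (Set.toFinite I)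
      omega
    · push_neg at hA
      have hmax : ∀ K : Set V, G.IsClique K → K.ncard ≤ C.ncard := by
        intro K hK
        by_cases hKI : (K ∩ I) = ∅
        · refine Set.ncard_le_ncard ?_ (Set.toFinite C)
          intro x hx
          rcases hcover K hx with ⟨_, h⟩ | hmem
          · exact h
          · exact absurd (hKI ▸ hmem) (Set.notMem_empty x)
        · obtain ⟨v, hvK, hvI⟩ := Set.nonempty_iff_ne_empty.mpr hKI
          obtain ⟨c, hcC, hnadj⟩ := hA v hvI
          have hcK : c ∉ K := by
            intro hcK
            have hne : v ≠ c := fun h => Set.disjoint_left.mp hsplit.2.1 hcC (h ▸ hvI)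
            exact hnadj (hK hvK hcK hne)
          have hsubK : K ⊆ insert v (C \ {c}) := by
            intro x hx
            rcases hcover K hx with ⟨hxK, hxC⟩ | hxKI
            · exact Set.mem_insert_iff.mpr (Or.inr ⟨hxC, fun h => hcK (h ▸ hxK)⟩)
            · exact Set.mem_insert_iff.mpr (Or.inl (hsub1 K hK x hxKI v ⟨hvK, hvI⟩))
          calc K.ncard ≤ (insert v (C \ {c})).ncard :=
                Set.ncard_le_ncard hsubK (Set.toFinite _)
            _ ≤ (C \ {c}).ncard + 1 := Set.ncard_insert_le _ _
            _ = C.ncard := Set.ncard_diff_singleton_add_one hcC (Set.toFinite C)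
      exact le_trans (key_aux G hconn rep hrep C I hsplit hmax) (by norm_num)
end
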